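/- Determinant formula for the Lefschetz zeta function of a permutative squared-by-blocks map on a wedge sum: in the permutative algebraic model, with M := lcm(s₁,…,s_q), the identity ((1 − t)·ζ_f(t))^M = ∏_{j=1}^q ( ∏_{i∈Λ_j} ∏_{k=1}^N det(Id_{V_{i,k}} − t^{s_j}·B_{i,k})^{(−1)^{k+1}} )^{M/s_j} holds in ℚ[[t]], where for i ∈ Λ_j the map B_{i,k} := π_{i,k} ∘ F_k^{s_j} ∘ ι_{i,k} is the endomorphism of V_{i,k} induced by the return map f_ii^{s_j}, det(Id − t^{s_j}B_{i,k}) denotes the reverse characteristic polynomial regarded as a power series, and factors with exponent −1 denote multiplicative inverses in ℚ[[t]] (all these determinants have constant term 1, hence are invertible). -/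

import Mathlib

/-- The exponential `exp(f) = ∑_{j ≥ 0} f^j / j!` of a formal power series `f ∈ ℚ[[t]]`
(intended for series with zero constant term). -/
noncomputable def expPS (f : PowerSeries ℚ) : PowerSeries ℚ :=
  PowerSeries.mk fun n =>
    PowerSeries.coeff (R := ℚ) n (∑ j ∈ Finset.range (n + 1), (j.factorial : ℚ)⁻¹ • f ^ j)

/-- The Lefschetz zeta function `ζ(t) = exp(∑_{m ≥ 1} L(m)·t^m/m) ∈ ℚ[[t]]` of a sequence of
Lefschetz numbers `L : ℕ → ℚ`. -/
noncomputable def lefschetzZeta (L : ℕ → ℚ) : PowerSeries ℚ :=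
  expPS (PowerSeries.mk fun m => if m = 0 then 0 else L m / (m : ℚ))

/-- The reverse characteristic polynomial `det(Id − t^d·B)` of an endomorphism `B` of a
finite-dimensional ℚ-vector space, regarded as a formal power series in `ℚ[[t]]` (it is a
polynomial in `t^d`; the determinant is independent of the chosen basis). -/
noncomputable def revDet {V : Type*} [AddCommGroup V] [Module ℚ V] [FiniteDimensional ℚ V]
    (d : ℕ) (B : V →ₗ[ℚ] V) : PowerSeries ℚ :=
  Matrix.det
    ((1 : Matrix (Fin (Module.finrank ℚ V)) (Fin (Module.finrank ℚ V)) (PowerSeries ℚ)) -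
      (PowerSeries.X : PowerSeries ℚ) ^ d •
        ((LinearMap.toMatrix (Module.finBasis ℚ V) (Module.finBasis ℚ V) B).map
          (PowerSeries.C (R := ℚ))))

open PowerSeries

namespace Aux

lemma one_sub_X_mul_geom : ((1 : ℚ⟦X⟧) - X) * PowerSeries.mk (fun _ => (1:ℚ)) = 1 := by
  ext n
  rw [sub_mul, one_mul, map_sub]
  cases n with
  | zero => simp
  | succ n =>
    rw [coeff_mk]
    have : (X : ℚ⟦X⟧) * PowerSeries.mk (fun _ => (1:ℚ)) = X ^ 1 * PowerSeries.mk fun _ => (1:ℚ) := by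
      rw [pow_one]
    rw [this, show n + 1 = n + 1 by rfl, show (coeff (n+1)) (X ^ 1 * PowerSeries.mk fun _ => (1:ℚ)) = coeff n (PowerSeries.mk fun _ => (1:ℚ)) from coeff_X_pow_mul _ 1 n, coeff_mk]
    simp [coeff_one]

lemma coeff_pow_eq_zero {f : ℚ⟦X⟧} (hf : constantCoeff f = 0) {j n : ℕ} (h : n < j) :
    (coeff n) (f ^ j) = 0 := by
  have hX : (X : ℚ⟦X⟧) ∣ f := X_dvd_iff.2 hf
  have : (X : ℚ⟦X⟧) ^ j ∣ f ^ j := pow_dvd_pow_of_dvd hX j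
  exact (X_pow_dvd_iff.1 this) n h

lemma coeff_expPS_stable {f : ℚ⟦X⟧} (hf : constantCoeff f = 0) {n m : ℕ} (h : n < m) :
    (coeff n) (_root_.expPS f) = coeff n (∑ j ∈ Finset.range m, (j.factorial : ℚ)⁻¹ • f ^ j) := by
  rw [_root_.expPS, coeff_mk]
  have hsub : Finset.range (n+1) ⊆ Finset.range m := Finset.range_subset_range.2 (by omega)
  rw [map_sum, map_sum]
  refine Finset.sum_subset hsub fun j hj hj' => ?_
  simp only [Finset.mem_range] at hj hj'
  rw [map_smul, coeff_pow_eq_zero hf (by omega), smul_zero]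

lemma constantCoeff_expPS (f : ℚ⟦X⟧) : constantCoeff (_root_.expPS f) = 1 := by
  have : constantCoeff (_root_.expPS f) = coeff 0 (_root_.expPS f) := by
    rw [coeff_zero_eq_constantCoeff]
  rw [this, _root_.expPS, coeff_mk]
  simp

lemma derivative_expPS {f : ℚ⟦X⟧} (hf : constantCoeff f = 0) :
    d⁄dX ℚ (_root_.expPS f) = d⁄dX ℚ f * _root_.expPS f := by
  ext n
  set S : ℕ → ℚ⟦X⟧ := fun m => ∑ j ∈ Finset.range m, (j.factorial : ℚ)⁻¹ • f ^ j with hS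
  have hDS : d⁄dX ℚ (S (n+2)) = d⁄dX ℚ f * S (n+1) := by
    rw [hS]
    simp only [map_sum]
    have : ∀ j ∈ Finset.range (n+2), d⁄dX ℚ ((j.factorial : ℚ)⁻¹ • f ^ j)
        = (j.factorial : ℚ)⁻¹ • (j • (f ^ (j-1) * d⁄dX ℚ f)) := by
      intro j _
      rw [Derivation.map_smul, Derivation.leibniz_pow, smul_eq_mul]
    rw [Finset.sum_congr rfl this,
      Finset.sum_range_succ' (fun j => (j.factorial : ℚ)⁻¹ • (j • (f ^ (j-1) * d⁄dX ℚ f)))]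
    simp only [zero_smul, smul_zero, add_zero]
    rw [Finset.mul_sum]
    refine Finset.sum_congr rfl fun j _ => ?_
    have hj1 : ((j:ℚ) + 1) ≠ 0 := by positivity
    have key : ((j+1).factorial : ℚ)⁻¹ • ((j+1) • (f ^ j * d⁄dX ℚ f))
        = (j.factorial : ℚ)⁻¹ • (f ^ j * d⁄dX ℚ f) := by
      rw [← Nat.cast_smul_eq_nsmul ℚ (j+1), smul_smul, Nat.factorial_succ]
      congr 1
      push_cast
      rw [mul_inv, mul_comm ((j:ℚ)+1)⁻¹, mul_assoc, inv_mul_cancel₀ hj1, mul_one]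
    rw [Nat.add_sub_cancel, key, mul_smul_comm]
    congr 1
    ring
  have h1 : coeff n (d⁄dX ℚ (_root_.expPS f)) = coeff n (d⁄dX ℚ (S (n+2))) := by
    rw [coeff_derivative, coeff_derivative, coeff_expPS_stable hf (show n + 1 < n + 2 by omega)]
  have h2 : coeff n (d⁄dX ℚ f * _root_.expPS f) = coeff n (d⁄dX ℚ f * S (n+1)) := by
    rw [coeff_mul, coeff_mul]
    refine Finset.sum_congr rfl fun p hp => ?_
    rw [Finset.HasAntidiagonal.mem_antidiagonal] at hp
    rw [coeff_expPS_stable hf (show p.2 < n + 1 by omega)]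
  rw [h1, h2, hDS]

end Aux

namespace Aux

/-- Uniqueness: same "logarithmic derivative relation" and constant term 1 implies equal. -/
lemma eq_of_deriv_rel {F G : ℚ⟦X⟧} (hF : constantCoeff F = 1) (hG : constantCoeff G = 1)
    (h : d⁄dX ℚ F * G = d⁄dX ℚ G * F) : F = G := by
  ext n
  induction n using Nat.strong_induction_on with
  | _ n IH =>
    match n with
    | 0 => rw [coeff_zero_eq_constantCoeff, hF, hG]
    | (n+1) =>
      have hc := congrArg (coeff n) h
      rw [coeff_mul, coeff_mul] at hc
      have hmem : (n, 0) ∈ Finset.HasAntidiagonal.antidiagonal n := by simp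
      rw [← Finset.add_sum_erase _ _ hmem, ← Finset.add_sum_erase _ _ hmem] at hc
      have hrest : ∑ p ∈ (Finset.HasAntidiagonal.antidiagonal n).erase (n, 0),
          coeff p.1 (d⁄dX ℚ F) * coeff p.2 G
          = ∑ p ∈ (Finset.HasAntidiagonal.antidiagonal n).erase (n, 0),
          coeff p.1 (d⁄dX ℚ G) * coeff p.2 F := by
        refine Finset.sum_congr rfl fun p hp => ?_
        rw [Finset.mem_erase, Finset.HasAntidiagonal.mem_antidiagonal] at hp
        have hp1 : p.1 + 1 ≤ n := by
          rcases Nat.lt_or_ge p.1 n with h1 | h1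
          · omega
          · exfalso; apply hp.1
            have : p.1 = n := by omega
            have : p.2 = 0 := by omega
            exact Prod.ext (by omega) this
        rw [coeff_derivative, coeff_derivative, IH (p.1+1) (by omega), IH p.2 (by omega)]
      rw [hrest] at hc
      have key : coeff n (d⁄dX ℚ F) * coeff 0 G = coeff n (d⁄dX ℚ G) * coeff 0 F :=
        add_right_cancel hc
      have hF0 : coeff 0 F = 1 := by rw [coeff_zero_eq_constantCoeff]; exact hF
      have hG0 : coeff 0 G = 1 := by rw [coeff_zero_eq_constantCoeff]; exact hG
      rw [coeff_derivative, coeff_derivative, hF0, hG0, mul_one, mul_one] at key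
      have hn : ((n:ℚ) + 1) ≠ 0 := by positivity
      exact mul_right_cancel₀ hn key

lemma ld_mul {h₁ h₂ e₁ e₂ : ℚ⟦X⟧} (H1 : d⁄dX ℚ h₁ = e₁ * h₁) (H2 : d⁄dX ℚ h₂ = e₂ * h₂) :
    d⁄dX ℚ (h₁ * h₂) = (e₁ + e₂) * (h₁ * h₂) := by
  rw [Derivation.leibniz, smul_eq_mul, smul_eq_mul, H1, H2]
  ring

lemma ld_pow {h e : ℚ⟦X⟧} (H : d⁄dX ℚ h = e * h) (r : ℕ) :
    d⁄dX ℚ (h ^ r) = ((r : ℚ⟦X⟧) * e) * h ^ r := by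
  induction r with
  | zero => simp
  | succ r IH =>
    rw [pow_succ, ld_mul IH H]
    push_cast
    ring

lemma ld_inv {h e : ℚ⟦X⟧} (hu : constantCoeff h ≠ 0) (H : d⁄dX ℚ h = e * h) :
    d⁄dX ℚ h⁻¹ = (-e) * h⁻¹ := by
  rw [PowerSeries.derivative_inv', H]
  have : h⁻¹ * h = 1 := PowerSeries.inv_mul_cancel _ hu
  calc -h⁻¹ ^ 2 * (e * h) = (-e) * h⁻¹ * (h⁻¹ * h) := by ring
  _ = (-e) * h⁻¹ := by rw [this, mul_one]

lemma ld_prod {α : Type*} [DecidableEq α] (s : Finset α) (h e : α → ℚ⟦X⟧)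
    (H : ∀ a ∈ s, d⁄dX ℚ (h a) = e a * h a) :
    d⁄dX ℚ (∏ a ∈ s, h a) = (∑ a ∈ s, e a) * ∏ a ∈ s, h a := by
  induction s using Finset.induction_on with
  | empty => simp
  | @insert a s hnot IH =>
    rw [Finset.prod_insert hnot, Finset.sum_insert hnot,
      ld_mul (H a (Finset.mem_insert_self a s)) (IH fun b hb => H b (Finset.mem_insert_of_mem hb))]

end Aux

namespace Aux

lemma derivative_finset_prod {α : Type*} [DecidableEq α] (s : Finset α) (f : α → Polynomial ℚ) :
    Polynomial.derivative (∏ a ∈ s, f a)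
      = ∑ a ∈ s, (∏ b ∈ s.erase a, f b) * Polynomial.derivative (f a) := by
  induction s using Finset.induction_on with
  | empty => simp
  | @insert a s hnot IH =>
    rw [Finset.prod_insert hnot, Polynomial.derivative_mul, IH, Finset.sum_insert hnot,
      Finset.erase_insert hnot]
    rw [Finset.mul_sum]
    congr 1
    · rw [mul_comm]
    · refine Finset.sum_congr rfl fun b hb => ?_
      rw [Finset.erase_insert_of_ne (by rintro rfl; exact hnot hb),
        Finset.prod_insert (fun h => hnot (Finset.mem_of_mem_erase h))]
      ring

/-- Jacobi formula for polynomial matrices (column version). -/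
lemma derivative_det_poly {n : ℕ} (A : Matrix (Fin n) (Fin n) (Polynomial ℚ)) :
    Polynomial.derivative A.det
      = ∑ j, (A.updateCol j (fun i => Polynomial.derivative (A i j))).det := by
  rw [Matrix.det_apply']
  rw [map_sum]
  have step : ∀ σ : Equiv.Perm (Fin n),
      Polynomial.derivative (((Equiv.Perm.sign σ : ℤ) : Polynomial ℚ) * ∏ i, A (σ i) i)
      = ∑ j, ((Equiv.Perm.sign σ : ℤ) : Polynomial ℚ) *
          ((∏ i ∈ Finset.univ.erase j, A (σ i) i) * Polynomial.derivative (A (σ j) j)) := by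
    intro σ
    rw [Polynomial.derivative_mul, Polynomial.derivative_intCast, zero_mul, zero_add,
      derivative_finset_prod, Finset.mul_sum]
  rw [Finset.sum_congr rfl fun σ _ => step σ, Finset.sum_comm]
  refine Finset.sum_congr rfl fun j _ => ?_
  rw [Matrix.det_apply']
  refine Finset.sum_congr rfl fun σ _ => ?_
  have : ∏ i, (A.updateCol j fun i => Polynomial.derivative (A i j)) (σ i) i
      = (∏ i ∈ Finset.univ.erase j, A (σ i) i) * Polynomial.derivative (A (σ j) j) := by
    rw [← Finset.prod_erase_mul _ _ (Finset.mem_univ j)]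
    congr 1
    · refine Finset.prod_congr rfl fun i hi => ?_
      rw [Matrix.updateCol_ne (Finset.ne_of_mem_erase hi)]
    · rw [Matrix.updateCol_self]
  rw [this]

end Aux

namespace Aux

section Det

variable {nn : ℕ} (d : ℕ) (M : Matrix (Fin nn) (Fin nn) ℚ)

/-- The polynomial matrix `1 - X^d M`. -/
noncomputable def Ap : Matrix (Fin nn) (Fin nn) (Polynomial ℚ) :=
  1 - (Polynomial.X ^ d : Polynomial ℚ) • M.map Polynomial.C

/-- The power series matrix `1 - X^d M`. -/
noncomputable def Aps : Matrix (Fin nn) (Fin nn) ℚ⟦X⟧ :=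
  1 - ((X : ℚ⟦X⟧) ^ d) • M.map (C (R := ℚ))

/-- The geometric-series inverse of `Aps`. -/
noncomputable def Ginv : Matrix (Fin nn) (Fin nn) ℚ⟦X⟧ :=
  Matrix.of fun i j => PowerSeries.mk fun m => if d ∣ m then (M ^ (m / d)) i j else 0

lemma map_Ap : (Ap d M).map (Polynomial.coeToPowerSeries.ringHom (R := ℚ)) = Aps d M := by
  refine Matrix.ext fun i j => ?_
  simp only [Ap, Aps, Matrix.map_apply, Matrix.sub_apply, Matrix.smul_apply, Matrix.one_apply,
    smul_eq_mul]
  rw [map_sub, map_mul, map_pow, apply_ite (Polynomial.coeToPowerSeries.ringHom (R := ℚ)),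
    map_one, map_zero, Polynomial.coeToPowerSeries.ringHom_apply,
    Polynomial.coeToPowerSeries.ringHom_apply, Polynomial.coe_X, Polynomial.coe_C]

lemma dvd_sub_iff {d m : ℕ} (hd : 0 < d) (h : d ≤ m) : d ∣ m - d ↔ d ∣ m := by
  constructor
  · rintro ⟨t, ht⟩
    refine ⟨t + 1, ?_⟩
    rw [Nat.mul_succ]
    omega
  · rintro ⟨t, ht⟩
    rcases t with _ | t
    · omega
    · refine ⟨t, ?_⟩
      rw [Nat.mul_succ] at ht
      omega

lemma sub_div_add_one {d m : ℕ} (hd : 0 < d) (h : d ≤ m) (hdvd : d ∣ m) :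
    (m - d) / d + 1 = m / d := by
  obtain ⟨t, rfl⟩ := hdvd
  rcases t with _ | t
  · omega
  · have h1 : d * (t + 1) - d = d * t := by rw [Nat.mul_succ]; omega
    rw [h1, Nat.mul_div_cancel_left _ hd, Nat.mul_div_cancel_left _ hd]

lemma Aps_mul_Ginv (hd : 0 < d) : Aps d M * Ginv d M = 1 := by
  refine Matrix.ext fun i j => ?_
  have expand : (Aps d M * Ginv d M) i j
      = Ginv d M i j - (X : ℚ⟦X⟧)^d * ∑ l, C (M i l) * Ginv d M l j := by
    rw [Matrix.mul_apply]
    simp only [Aps, Matrix.sub_apply, Matrix.smul_apply, Matrix.map_apply, Matrix.one_apply,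
      smul_eq_mul, sub_mul, ite_mul, one_mul, zero_mul]
    rw [Finset.sum_sub_distrib]
    simp only [Finset.sum_ite_eq, Finset.mem_univ, if_true]
    congr 1
    rw [Finset.mul_sum]
    refine Finset.sum_congr rfl fun l _ => ?_
    ring
  rw [expand]
  ext m
  rw [map_sub]
  have hGij : coeff m (Ginv d M i j) = if d ∣ m then (M ^ (m / d)) i j else 0 := by
    simp [Ginv]
  rw [hGij]
  have hsum : ∀ mm : ℕ, coeff mm (∑ l, C (M i l) * Ginv d M l j)
      = if d ∣ mm then (M ^ (mm / d + 1)) i j else 0 := by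
    intro mm
    rw [map_sum]
    have : ∀ l, coeff mm (C (M i l) * Ginv d M l j)
        = M i l * (if d ∣ mm then (M ^ (mm / d)) l j else 0) := by
      intro l
      rw [coeff_C_mul]
      simp [Ginv]
    rw [Finset.sum_congr rfl fun l _ => this l]
    split_ifs with h
    · rw [pow_succ']
      rw [Matrix.mul_apply]
    · simp
  rw [coeff_X_pow_mul']
  by_cases hm : d ≤ m
  · have hm0 : m ≠ 0 := by omega
    rw [if_pos hm, hsum]
    have hiff := dvd_sub_iff hd hm
    by_cases hdvd : d ∣ m
    · rw [if_pos (hiff.2 hdvd), if_pos hdvd, sub_div_add_one hd hm hdvd]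
      have : (1 : Matrix (Fin nn) (Fin nn) ℚ⟦X⟧) i j = if i = j then 1 else 0 := Matrix.one_apply
      rw [this]
      split_ifs with hij
      · subst hij
        rw [coeff_one, if_neg hm0]
        ring
      · rw [map_zero]
        ring
    · rw [if_neg (fun hc => hdvd (hiff.1 hc)), if_neg hdvd, sub_zero]
      have : (1 : Matrix (Fin nn) (Fin nn) ℚ⟦X⟧) i j = if i = j then 1 else 0 := Matrix.one_apply
      rw [this]
      split_ifs with hij
      · rw [coeff_one, if_neg hm0]
      · rw [map_zero]
  · rw [if_neg hm, sub_zero]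
    by_cases hm0 : m = 0
    · subst hm0
      rw [if_pos (dvd_zero d), Nat.zero_div, pow_zero]
      have : (1 : Matrix (Fin nn) (Fin nn) ℚ⟦X⟧) i j = if i = j then 1 else 0 := Matrix.one_apply
      rw [this, Matrix.one_apply]
      split_ifs with hij
      · rw [coeff_zero_eq_constantCoeff, map_one]
      · rw [map_zero]
    · have hnd : ¬ d ∣ m := by
        rintro ⟨t, rfl⟩
        rcases t with _ | t
        · omega
        · have : d ≤ d * (t+1) := by rw [Nat.mul_succ]; omega
          omega
      rw [if_neg hnd]
      have : (1 : Matrix (Fin nn) (Fin nn) ℚ⟦X⟧) i j = if i = j then 1 else 0 := Matrix.one_apply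
      rw [this]
      split_ifs with hij
      · rw [coeff_one, if_neg hm0]
      · rw [map_zero]

lemma adjugate_Aps (hd : 0 < d) :
    Matrix.adjugate (Aps d M) = (Aps d M).det • Ginv d M := by
  have h1 : Matrix.adjugate (Aps d M) * (Aps d M * Ginv d M) = Matrix.adjugate (Aps d M) := by
    rw [Aps_mul_Ginv d M hd, mul_one]
  calc Matrix.adjugate (Aps d M) = Matrix.adjugate (Aps d M) * (Aps d M * Ginv d M) := h1.symm
  _ = (Matrix.adjugate (Aps d M) * Aps d M) * Ginv d M := by rw [mul_assoc]
  _ = ((Aps d M).det • (1 : Matrix (Fin nn) (Fin nn) ℚ⟦X⟧)) * Ginv d M := by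
      rw [Matrix.adjugate_mul]
  _ = (Aps d M).det • Ginv d M := by rw [Matrix.smul_mul, one_mul]

lemma trace_Ginv_mul (hd : 0 < d) :
    Matrix.trace (Ginv d M * M.map (C (R := ℚ)))
      = PowerSeries.mk (fun m => if d ∣ m then Matrix.trace (M ^ (m / d + 1)) else 0) := by
  ext m
  rw [Matrix.trace, map_sum, coeff_mk]
  have : ∀ i, coeff m ((Ginv d M * M.map (C (R := ℚ))).diag i)
      = if d ∣ m then (M ^ (m/d) * M) i i else 0 := by
    intro i
    rw [Matrix.diag_apply, Matrix.mul_apply, map_sum]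
    have : ∀ l, coeff m (Ginv d M i l * (M.map (C (R := ℚ))) l i)
        = (if d ∣ m then (M ^ (m/d)) i l else 0) * M l i := by
      intro l
      rw [Matrix.map_apply, coeff_mul_C]
      simp [Ginv]
    rw [Finset.sum_congr rfl fun l _ => this l]
    split_ifs with h
    · rw [Matrix.mul_apply]
    · simp
  rw [Finset.sum_congr rfl fun i _ => this i]
  split_ifs with h
  · rw [← pow_succ, Matrix.trace]
    simp [Matrix.diag_apply]
  · simp

end Det

end Aux

namespace Aux

section Det2

variable {nn : ℕ} {d : ℕ} (M : Matrix (Fin nn) (Fin nn) ℚ)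

lemma hpoly (hd : 0 < d) : Polynomial.derivative (Ap d M).det
    = (-(Polynomial.C (d:ℚ) * Polynomial.X ^ (d-1))) *
      ∑ j, ∑ r, Matrix.adjugate (Ap d M) j r * Polynomial.C (M r j) := by
  rw [derivative_det_poly]
  have hcol : ∀ j : Fin nn, (fun i => Polynomial.derivative (Ap d M i j))
      = (-(Polynomial.C (d:ℚ) * Polynomial.X ^ (d-1))) • (fun i => Polynomial.C (M i j)) := by
    intro j; funext i
    simp only [Ap, Matrix.sub_apply, Matrix.smul_apply, Matrix.map_apply, Matrix.one_apply,
      smul_eq_mul, Pi.smul_apply]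
    rw [Polynomial.derivative_sub]
    have h1 : Polynomial.derivative ((if i = j then 1 else 0 : Polynomial ℚ)) = 0 := by
      split_ifs <;> simp
    rw [h1, zero_sub, Polynomial.derivative_mul, Polynomial.derivative_C, mul_zero, add_zero,
      Polynomial.derivative_X_pow]
    ring
  have step : ∀ j : Fin nn,
      ((Ap d M).updateCol j fun i => Polynomial.derivative (Ap d M i j)).det
      = (-(Polynomial.C (d:ℚ) * Polynomial.X ^ (d-1))) *
        ∑ r, Matrix.adjugate (Ap d M) j r * Polynomial.C (M r j) := by
    intro j
    rw [hcol j, Matrix.det_updateCol_smul]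
    congr 1
    have : ((Ap d M).updateCol j fun i => Polynomial.C (M i j)).det
        = Matrix.cramer (Ap d M) (fun i => Polynomial.C (M i j)) j := (Matrix.cramer_apply _ _ _).symm
    rw [this, Matrix.cramer_eq_adjugate_mulVec]
    simp [Matrix.mulVec, dotProduct]
  rw [Finset.sum_congr rfl fun j _ => step j, ← Finset.mul_sum]

lemma htrans (hd : 0 < d) : d⁄dX ℚ ((Aps d M).det)
    = (-(C (d:ℚ) * (X:ℚ⟦X⟧) ^ (d-1))) *
      ∑ j, ∑ r, Matrix.adjugate (Aps d M) j r * C (M r j) := by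
  have hdet : (Aps d M).det = Polynomial.coeToPowerSeries.ringHom (R := ℚ) ((Ap d M).det) := by
    rw [RingHom.map_det, RingHom.mapMatrix_apply, map_Ap]
  have hmapped : d⁄dX ℚ ((Aps d M).det)
      = Polynomial.coeToPowerSeries.ringHom (R := ℚ) (Polynomial.derivative ((Ap d M).det)) := by
    rw [hdet, Polynomial.coeToPowerSeries.ringHom_apply, derivative_coe,
      Polynomial.coeToPowerSeries.ringHom_apply]
  rw [hmapped, hpoly M hd, map_mul, map_neg, map_mul, map_pow, map_sum]
  congr 1
  · rw [Polynomial.coeToPowerSeries.ringHom_apply, Polynomial.coeToPowerSeries.ringHom_apply,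
      Polynomial.coe_C, Polynomial.coe_X]
  · refine Finset.sum_congr rfl fun j _ => ?_
    rw [map_sum]
    refine Finset.sum_congr rfl fun r _ => ?_
    rw [map_mul]
    congr 1
    · have := RingHom.map_adjugate (Polynomial.coeToPowerSeries.ringHom (R := ℚ)) (Ap d M)
      have h2 : (Polynomial.coeToPowerSeries.ringHom (R := ℚ)).mapMatrix (Ap d M) = Aps d M := by
        rw [RingHom.mapMatrix_apply, map_Ap]
      rw [h2] at this
      rw [← this, RingHom.mapMatrix_apply, Matrix.map_apply]
    · rw [Polynomial.coeToPowerSeries.ringHom_apply, Polynomial.coe_C]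

lemma hser (hd : 0 < d) :
    C (d:ℚ) * (X:ℚ⟦X⟧)^(d-1) * PowerSeries.mk (fun m => if d ∣ m then Matrix.trace (M^(m/d+1)) else 0)
    = PowerSeries.mk (fun m => if d ∣ (m+1) then (d:ℚ) * Matrix.trace (M^((m+1)/d)) else 0) := by
  ext n
  rw [mul_assoc, coeff_C_mul, coeff_X_pow_mul', coeff_mk]
  by_cases hn : d - 1 ≤ n
  · rw [if_pos hn, coeff_mk]
    have he : n - (d-1) = n + 1 - d := by omega
    have hle : d ≤ n + 1 := by omega
    rw [he]
    by_cases hdvd : d ∣ n + 1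
    · rw [if_pos ((dvd_sub_iff hd hle).2 hdvd), if_pos hdvd, sub_div_add_one hd hle hdvd]
    · rw [if_neg (fun hc => hdvd ((dvd_sub_iff hd hle).1 hc)), if_neg hdvd, mul_zero]
  · rw [if_neg hn, mul_zero]
    have : ¬ d ∣ n + 1 := by
      rintro ⟨t, ht⟩
      rcases t with _ | t
      · omega
      · rw [Nat.mul_succ] at ht
        omega
    rw [coeff_mk, if_neg this]

lemma derivative_revdet (hd : 0 < d) :
    d⁄dX ℚ (Aps d M).det
      = (-(PowerSeries.mk fun m => if d ∣ (m+1) then (d:ℚ) * Matrix.trace (M ^ ((m+1)/d)) else 0))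
        * (Aps d M).det := by
  rw [htrans M hd]
  have hadj : ∀ j r : Fin nn, Matrix.adjugate (Aps d M) j r = (Aps d M).det * Ginv d M j r := by
    intro j r
    rw [adjugate_Aps d M hd, Matrix.smul_apply, smul_eq_mul]
  have : ∑ j, ∑ r, Matrix.adjugate (Aps d M) j r * C (M r j)
      = (Aps d M).det * Matrix.trace (Ginv d M * M.map (C (R := ℚ))) := by
    rw [Matrix.trace, Finset.mul_sum]
    refine Finset.sum_congr rfl fun j _ => ?_
    rw [Matrix.diag_apply, Matrix.mul_apply, Finset.mul_sum]
    refine Finset.sum_congr rfl fun r _ => ?_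
    rw [hadj j r, Matrix.map_apply]
    ring
  rw [this, trace_Ginv_mul d M hd]
  have h2 : (-(C (d:ℚ) * (X:ℚ⟦X⟧)^(d-1))) * ((Aps d M).det *
        PowerSeries.mk (fun m => if d ∣ m then Matrix.trace (M^(m/d+1)) else 0))
      = (-(C (d:ℚ) * (X:ℚ⟦X⟧)^(d-1) *
        PowerSeries.mk (fun m => if d ∣ m then Matrix.trace (M^(m/d+1)) else 0))) * (Aps d M).det := by
    ring
  rw [h2, neg_mul, hser M hd, neg_mul]

end Det2

end Aux

namespace Aux

section RevDet

lemma constantCoeff_detAps {nn d : ℕ} (hd : 0 < d) (M : Matrix (Fin nn) (Fin nn) ℚ) :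
    constantCoeff (Aps d M).det = 1 := by
  rw [RingHom.map_det]
  have : (constantCoeff (R := ℚ)).mapMatrix (Aps d M) = 1 := by
    refine Matrix.ext fun i j => ?_
    simp only [RingHom.mapMatrix_apply, Matrix.map_apply, Aps, Matrix.sub_apply,
      Matrix.smul_apply, Matrix.one_apply, smul_eq_mul, map_sub, map_mul, map_pow]
    rw [constantCoeff_X, zero_pow (by omega), zero_mul, sub_zero]
    split_ifs with h <;> simp [Matrix.one_apply, h]
  rw [this, Matrix.det_one]

variable {V : Type*} [AddCommGroup V] [Module ℚ V] [FiniteDimensional ℚ V]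

/-- The trace series `∑_m (if d ∣ m+1) d·tr(B^{(m+1)/d}) t^m`. -/
noncomputable def Tser (d : ℕ) (B : V →ₗ[ℚ] V) : ℚ⟦X⟧ :=
  PowerSeries.mk fun m => if d ∣ (m+1) then (d:ℚ) * LinearMap.trace ℚ V (B^((m+1)/d)) else 0

lemma revDet_eq_detAps (d : ℕ) (B : V →ₗ[ℚ] V) :
    revDet d B = (Aps d (LinearMap.toMatrix (Module.finBasis ℚ V) (Module.finBasis ℚ V) B)).det :=
  rfl

lemma trace_pow_toMatrix (B : V →ₗ[ℚ] V) (r : ℕ) :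
    Matrix.trace ((LinearMap.toMatrix (Module.finBasis ℚ V) (Module.finBasis ℚ V) B) ^ r)
      = LinearMap.trace ℚ V (B ^ r) := by
  have h : (LinearMap.toMatrix (Module.finBasis ℚ V) (Module.finBasis ℚ V) B) ^ r
      = LinearMap.toMatrix (Module.finBasis ℚ V) (Module.finBasis ℚ V) (B ^ r) := by
    induction r with
    | zero => simp [LinearMap.toMatrix_one]
    | succ r IH => rw [pow_succ, pow_succ, IH, ← LinearMap.toMatrix_mul]
  rw [h, LinearMap.trace_eq_matrix_trace ℚ (Module.finBasis ℚ V)]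

lemma constantCoeff_revDet {d : ℕ} (hd : 0 < d) (B : V →ₗ[ℚ] V) :
    constantCoeff (revDet d B) = 1 := by
  rw [revDet_eq_detAps, constantCoeff_detAps hd]

lemma ld_revDet {d : ℕ} (hd : 0 < d) (B : V →ₗ[ℚ] V) :
    d⁄dX ℚ (revDet d B) = (-(Tser d B)) * revDet d B := by
  rw [revDet_eq_detAps, derivative_revdet _ hd]
  congr 2
  unfold Tser
  ext m
  rw [coeff_mk, coeff_mk]
  split_ifs with h
  · rw [trace_pow_toMatrix]
  · rfl

lemma ld_revDet_inv {d : ℕ} (hd : 0 < d) (B : V →ₗ[ℚ] V) :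
    d⁄dX ℚ (revDet d B)⁻¹ = (Tser d B) * (revDet d B)⁻¹ := by
  have := ld_inv (h := revDet d B) (e := -(Tser d B))
    (by rw [constantCoeff_revDet hd]; exact one_ne_zero) (ld_revDet hd B)
  rwa [neg_neg] at this

end RevDet

end Aux

namespace Aux

section TracePi

variable {ι : Type*} [Fintype ι] [DecidableEq ι] (W : ι → Type*)
  [∀ i, AddCommGroup (W i)] [∀ i, Module ℚ (W i)] [∀ i, FiniteDimensional ℚ (W i)]

lemma trace_pi (φ : (Π i, W i) →ₗ[ℚ] (Π i, W i)) :
    LinearMap.trace ℚ _ φ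
      = ∑ i, LinearMap.trace ℚ (W i) ((LinearMap.proj i) ∘ₗ φ ∘ₗ (LinearMap.single ℚ W i)) := by
  have hid : (∑ i, (LinearMap.single ℚ W i) ∘ₗ (LinearMap.proj i : (Π j, W j) →ₗ[ℚ] W i))
      = LinearMap.id := by
    refine LinearMap.ext fun x => ?_
    rw [LinearMap.sum_apply]
    simp only [LinearMap.comp_apply, LinearMap.proj_apply, LinearMap.id_apply]
    have : ∀ i, (LinearMap.single ℚ W i) (x i) = Pi.single i (x i) := fun i => rfl
    rw [Finset.sum_congr rfl fun i _ => this i]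
    exact Finset.univ_sum_single x
  have hsc : (∑ i, (LinearMap.single ℚ W i) ∘ₗ (LinearMap.proj i : (Π j, W j) →ₗ[ℚ] W i)) ∘ₗ φ
      = ∑ i, ((LinearMap.single ℚ W i) ∘ₗ (LinearMap.proj i : (Π j, W j) →ₗ[ℚ] W i)) ∘ₗ φ := by
    refine LinearMap.ext fun x => ?_
    simp [LinearMap.sum_apply]
  conv_lhs => rw [show φ = (∑ i, (LinearMap.single ℚ W i) ∘ₗ
    (LinearMap.proj i : (Π j, W j) →ₗ[ℚ] W i)) ∘ₗ φ by rw [hid, LinearMap.id_comp]]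
  rw [hsc, map_sum]
  refine Finset.sum_congr rfl fun i _ => ?_
  rw [LinearMap.comp_assoc,
    LinearMap.trace_comp_comm' (LinearMap.proj i ∘ₗ φ) (LinearMap.single ℚ W i),
    LinearMap.comp_assoc]

end TracePi

section Perm

variable {s : ℕ} (σ : Equiv.Perm (Fin s)) (W : Fin s → Type*)
  [∀ i, AddCommGroup (W i)] [∀ i, Module ℚ (W i)]
  (F : (Π i, W i) →ₗ[ℚ] (Π i, W i))
  (hF : ∀ (i : Fin s) (v : W i), F (Pi.single i v) = Pi.single (σ i) ((F (Pi.single i v)) (σ i)))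

include hF in
lemma pow_single (m : ℕ) (i : Fin s) (v : W i) :
    (F ^ m) (Pi.single i v)
      = Pi.single ((σ ^ m) i) (((F ^ m) (Pi.single i v)) ((σ ^ m) i)) := by
  induction m with
  | zero =>
    rw [pow_zero, pow_zero]
    simp only [Module.End.one_apply, Equiv.Perm.coe_one, id_eq]
    rw [Pi.single_eq_same]
  | succ m IH =>
    have hFs : (F ^ (m+1)) (Pi.single i v) = F ((F ^ m) (Pi.single i v)) := by
      rw [pow_succ']; rfl
    have hσ : (σ ^ (m+1)) i = σ ((σ ^ m) i) := by
      rw [pow_succ']; rfl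
    rw [hFs, IH, hF ((σ ^ m) i), hσ, Pi.single_eq_same]

include hF in
lemma proj_pow_single_eq_zero (m : ℕ) (i : Fin s) (h : (σ ^ m) i ≠ i) :
    (LinearMap.proj i) ∘ₗ (F ^ m) ∘ₗ (LinearMap.single ℚ W i) = 0 := by
  refine LinearMap.ext fun v => ?_
  simp only [LinearMap.comp_apply, LinearMap.proj_apply, LinearMap.zero_apply]
  have hs : (LinearMap.single ℚ W i) v = Pi.single i v := rfl
  rw [hs, pow_single σ W F hF m i v, Pi.single_eq_of_ne (Ne.symm h)]

include hF in
lemma proj_pow_single_eq_pow {b : ℕ} {i : Fin s} (hb : (σ ^ b) i = i) (r : ℕ) :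
    (LinearMap.proj i) ∘ₗ (F ^ (b * r)) ∘ₗ (LinearMap.single ℚ W i)
      = ((LinearMap.proj i) ∘ₗ (F ^ b) ∘ₗ (LinearMap.single ℚ W i)) ^ r := by
  induction r with
  | zero =>
    rw [Nat.mul_zero, pow_zero, pow_zero]
    refine LinearMap.ext fun v => ?_
    simp only [LinearMap.comp_apply, LinearMap.proj_apply, Module.End.one_apply]
    have hs : (LinearMap.single ℚ W i) v = Pi.single i v := rfl
    rw [hs, Pi.single_eq_same]
  | succ r IH =>
    rw [pow_succ, ← IH]
    refine LinearMap.ext fun v => ?_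
    have h1 : F ^ (b * (r+1)) = F ^ (b * r) * F ^ b := by rw [← pow_add, Nat.mul_succ]
    have hs : (LinearMap.single ℚ W i) v = Pi.single i v := rfl
    have h2 : (F ^ b) (Pi.single i v) = Pi.single i (((F ^ b) (Pi.single i v)) i) := by
      have := pow_single σ W F hF b i v
      rwa [hb] at this
    simp only [Module.End.mul_apply, LinearMap.comp_apply, LinearMap.proj_apply, h1]
    rw [hs, h2, Pi.single_eq_same]
    rfl

end Perm

section Orbit

lemma perm_pow_apply {s : ℕ} (σ : Equiv.Perm (Fin s)) (m : ℕ) (i : Fin s) :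
    (σ ^ m) i = (⇑σ)^[m] i := by
  rw [Equiv.Perm.iterate_eq_pow]

lemma minimalPeriod_pos {s : ℕ} (σ : Equiv.Perm (Fin s)) (i : Fin s) :
    0 < Function.minimalPeriod ⇑σ i := by
  apply Function.IsPeriodicPt.minimalPeriod_pos (orderOf_pos σ)
  show (⇑σ)^[orderOf σ] i = i
  rw [Equiv.Perm.iterate_eq_pow, pow_orderOf_eq_one]
  rfl

lemma orbit_card {s : ℕ} (σ : Equiv.Perm (Fin s)) (Λj : Finset (Fin s)) (i : Fin s)
    (horb : ∀ i', i' ∈ Λj ↔ ∃ m : ℕ, (σ ^ m) i = i') :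
    Λj.card = Function.minimalPeriod ⇑σ i := by
  have hp := minimalPeriod_pos σ i
  set p := Function.minimalPeriod ⇑σ i with hpdef
  have himg : Λj = Finset.image (fun a => (σ ^ a) i) (Finset.range p) := by
    ext i'
    rw [horb, Finset.mem_image]
    constructor
    · rintro ⟨m, rfl⟩
      refine ⟨m % p, Finset.mem_range.2 (Nat.mod_lt _ hp), ?_⟩
      rw [perm_pow_apply, perm_pow_apply, Function.iterate_mod_minimalPeriod_eq]
    · rintro ⟨m, _, rfl⟩
      exact ⟨m, rfl⟩
  rw [himg, Finset.card_image_of_injOn, Finset.card_range]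
  intro a ha b hb hab
  simp only [Finset.coe_range, Set.mem_Iio] at ha hb
  have := Function.iterate_injOn_Iio_minimalPeriod (f := ⇑σ) (x := i) ha hb
  apply this
  show (⇑σ)^[a] i = (⇑σ)^[b] i
  rw [← perm_pow_apply, ← perm_pow_apply]
  exact hab

lemma pow_fix_iff_dvd {s : ℕ} (σ : Equiv.Perm (Fin s)) (i : Fin s) (m : ℕ) :
    (σ ^ m) i = i ↔ Function.minimalPeriod ⇑σ i ∣ m := by
  rw [← Function.isPeriodicPt_iff_minimalPeriod_dvd]
  show _ ↔ (⇑σ)^[m] i = i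
  rw [perm_pow_apply]

end Orbit

end Aux

open Aux

/-- **Determinant formula for the Lefschetz zeta function of a permutative squared-by-blocks
map on a wedge sum.**  In the permutative algebraic model (`σ` a permutation of `{1,…,s}`
with orbits `Λ 1, …, Λ q` of cardinalities `s₁,…,s_q`; `F k` the block-permutation
endomorphism of `⊕_i V i k` built from the maps `A i k : V i k → V (σ i) k`), with
`L m = 1 + ∑_{k=1}^N (-1)^k tr(F_k^m)`, `ζ_f(t) = exp(∑_{m≥1} L(f^m) t^m/m)` and
`M = lcm(s₁,…,s_q)`, the identity
`((1 − t)·ζ_f(t))^M = ∏_{j=1}^q (∏_{i∈Λ_j} ∏_{k=1}^N det(Id − t^{s_j}·B_{i,k})^{(−1)^{k+1}})^{M/s_j}`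
holds in `ℚ[[t]]`, where `B_{i,k} = π_{i,k} ∘ F_k^{s_j} ∘ ι_{i,k}` is the endomorphism of
`V i k` induced by the return map `f_ii^{s_j}` (for `i ∈ Λ_j`), and a factor with exponent
`−1` denotes the multiplicative inverse in `ℚ[[t]]` (the homology degree of `k : Fin N` is
`(k : ℕ) + 1`, so the exponent `(−1)^{k+1}` is `+1` exactly when `(k : ℕ)` is even). -/
theorem stmt14 (s N q : ℕ) (hs : 1 ≤ s) (hN : 1 ≤ N)
    (σ : Equiv.Perm (Fin s))
    (Λ : Fin q → Finset (Fin s))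
    (hΛorb : ∀ j, ∀ i ∈ Λ j, ∀ i', i' ∈ Λ j ↔ ∃ m : ℕ, (σ ^ m) i = i')
    (hΛne : ∀ j, (Λ j).Nonempty)
    (hΛcover : ∀ i, ∃ j, i ∈ Λ j)
    (hΛdisj : ∀ j j', j ≠ j' → Disjoint (Λ j) (Λ j'))
    (sVec : Fin q → ℕ) (hsVec : ∀ j, sVec j = (Λ j).card)
    (M : ℕ) (hM : M = Finset.univ.lcm sVec)
    (V : Fin s → Fin N → Type*)
    [∀ i k, AddCommGroup (V i k)] [∀ i k, Module ℚ (V i k)]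
    [∀ i k, FiniteDimensional ℚ (V i k)]
    (hdim : ∀ (k : Fin N) (i i' : Fin s), (∃ m : ℕ, (σ ^ m) i = i') →
      Module.finrank ℚ (V i k) = Module.finrank ℚ (V i' k))
    (A : ∀ i k, V i k →ₗ[ℚ] V (σ i) k)
    (F : ∀ k, (Π i, V i k) →ₗ[ℚ] (Π i, V i k))
    (hF : ∀ k (i : Fin s) (v : V i k), F k (Pi.single i v) = Pi.single (σ i) (A i k v))
    (L : ℕ → ℚ)
    (hL : ∀ m, L m =
      1 + ∑ k : Fin N, (-1 : ℚ) ^ ((k : ℕ) + 1) *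
        LinearMap.trace ℚ (Π i, V i k) ((F k) ^ m)) :
    ((1 - PowerSeries.X) * lefschetzZeta L) ^ M =
      ∏ j : Fin q,
        (∏ i ∈ Λ j, ∏ k : Fin N,
          (if Even (k : ℕ) then
            revDet (sVec j)
              ((LinearMap.proj i) ∘ₗ ((F k) ^ (sVec j)) ∘ₗ
                (LinearMap.single ℚ (fun j' => V j' k) i))
          else
            (revDet (sVec j)
              ((LinearMap.proj i) ∘ₗ ((F k) ^ (sVec j)) ∘ₗ
                (LinearMap.single ℚ (fun j' => V j' k) i)))⁻¹)) ^ (M / sVec j) := by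
  classical
  classical
  -- basic positivity facts
  have hsVecpos : ∀ j, 0 < sVec j := fun j => by
    rw [hsVec j]; exact Finset.card_pos.2 (hΛne j)
  have hsdvdM : ∀ j, sVec j ∣ M := fun j => by
    rw [hM]; exact Finset.dvd_lcm (Finset.mem_univ j)
  -- notation
  set f : ℚ⟦X⟧ := PowerSeries.mk fun m => if m = 0 then 0 else L m / (m : ℚ) with hfdef
  have hf0 : constantCoeff f = 0 := by
    rw [hfdef, ← coeff_zero_eq_constantCoeff_apply, coeff_mk]
    simp
  have hzeta : lefschetzZeta L = expPS f := rfl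
  have hf' : d⁄dX ℚ f = PowerSeries.mk fun m => L (m+1) := by
    ext n
    rw [coeff_derivative, hfdef, coeff_mk, coeff_mk, if_neg (Nat.succ_ne_zero n)]
    have : ((n:ℚ)+1) ≠ 0 := by positivity
    push_cast
    field_simp
  set g1 : ℚ⟦X⟧ := PowerSeries.mk fun _ => (1:ℚ) with hg1def
  have hgeom : ((1 : ℚ⟦X⟧) - X) * g1 = 1 := one_sub_X_mul_geom
  have hzder : d⁄dX ℚ (expPS f) = (PowerSeries.mk fun m => L (m+1)) * expPS f := by
    rw [derivative_expPS hf0, hf']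
  -- derivative of the base (1-X)ζ
  have hbase : d⁄dX ℚ (((1 : ℚ⟦X⟧) - X) * expPS f)
      = ((PowerSeries.mk fun m => L (m+1)) - g1) * (((1 : ℚ⟦X⟧) - X) * expPS f) := by
    rw [Derivation.leibniz, hzder]
    have hD1X : d⁄dX ℚ ((1 : ℚ⟦X⟧) - X) = -1 := by
      rw [map_sub, derivative_X, Derivation.map_one_eq_zero, zero_sub]
    rw [hD1X, smul_eq_mul, smul_eq_mul]
    have expand : ((PowerSeries.mk fun m => L (m+1)) - g1) * (((1 : ℚ⟦X⟧) - X) * expPS f)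
        = ((1 : ℚ⟦X⟧) - X) * ((PowerSeries.mk fun m => L (m+1)) * expPS f)
          - (((1 : ℚ⟦X⟧) - X) * g1) * expPS f := by ring
    rw [expand, hgeom, one_mul]
    ring
  have hLHS : d⁄dX ℚ ((((1 : ℚ⟦X⟧) - X) * expPS f) ^ M)
      = ((M : ℚ⟦X⟧) * ((PowerSeries.mk fun m => L (m+1)) - g1))
        * (((1 : ℚ⟦X⟧) - X) * expPS f) ^ M := ld_pow hbase M
  -- the blocks
  set B : ∀ (j : Fin q) (i : Fin s) (k : Fin N), V i k →ₗ[ℚ] V i k := fun j i k =>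
    (LinearMap.proj i) ∘ₗ ((F k) ^ (sVec j)) ∘ₗ (LinearMap.single ℚ (fun j' => V j' k) i)
    with hBdef
  set Q : ∀ (j : Fin q) (i : Fin s) (k : Fin N), ℚ⟦X⟧ := fun j i k =>
    if Even (k : ℕ) then revDet (sVec j) (B j i k) else (revDet (sVec j) (B j i k))⁻¹
    with hQdef
  set e : ∀ (j : Fin q) (i : Fin s) (k : Fin N), ℚ⟦X⟧ := fun j i k =>
    if Even (k : ℕ) then -(Tser (sVec j) (B j i k)) else Tser (sVec j) (B j i k)
    with hedef
  have hQder : ∀ j i k, d⁄dX ℚ (Q j i k) = e j i k * Q j i k := by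
    intro j i k
    rw [hQdef, hedef]
    by_cases hev : Even (k : ℕ)
    · simp only [if_pos hev]
      exact ld_revDet (hsVecpos j) (B j i k)
    · simp only [if_neg hev]
      exact ld_revDet_inv (hsVecpos j) (B j i k)
  have hQc : ∀ j i k, constantCoeff (Q j i k) = 1 := by
    intro j i k
    rw [hQdef]
    by_cases hev : Even (k : ℕ)
    · simp only [if_pos hev]
      exact constantCoeff_revDet (hsVecpos j) _
    · simp only [if_neg hev]
      rw [PowerSeries.constantCoeff_inv, constantCoeff_revDet (hsVecpos j)]
      norm_num
  -- derivative of RHS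
  have hPder : ∀ j, d⁄dX ℚ (∏ i ∈ Λ j, ∏ k : Fin N, Q j i k)
      = (∑ i ∈ Λ j, ∑ k : Fin N, e j i k) * ∏ i ∈ Λ j, ∏ k : Fin N, Q j i k := by
    intro j
    refine ld_prod _ _ _ fun i _ => ?_
    refine ld_prod _ _ _ fun k _ => ?_
    exact hQder j i k
  have hRHSder : d⁄dX ℚ (∏ j, (∏ i ∈ Λ j, ∏ k : Fin N, Q j i k) ^ (M / sVec j))
      = (∑ j, ((M / sVec j : ℕ) : ℚ⟦X⟧) * (∑ i ∈ Λ j, ∑ k : Fin N, e j i k))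
        * ∏ j, (∏ i ∈ Λ j, ∏ k : Fin N, Q j i k) ^ (M / sVec j) := by
    refine ld_prod _ _ _ fun j _ => ?_
    exact ld_pow (hPder j) (M / sVec j)
  -- constant coefficients
  have hcL : constantCoeff ((((1 : ℚ⟦X⟧) - X) * expPS f) ^ M) = 1 := by
    rw [map_pow, map_mul, map_sub, map_one, constantCoeff_X, sub_zero, constantCoeff_expPS,
      one_mul, one_pow]
  have hcR : constantCoeff (∏ j, (∏ i ∈ Λ j, ∏ k : Fin N, Q j i k) ^ (M / sVec j)) = 1 := by
    rw [map_prod]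
    refine Finset.prod_eq_one fun j _ => ?_
    rw [map_pow, map_prod]
    rw [Finset.prod_congr rfl fun i _ => map_prod _ _ _]
    rw [Finset.prod_congr rfl fun i (_ : i ∈ Λ j) =>
      Finset.prod_congr rfl fun k (_ : k ∈ Finset.univ) => hQc j i k]
    simp
  -- the key trace identity
  have traceF : ∀ (k : Fin N) (m : ℕ), LinearMap.trace ℚ (Π i, V i k) ((F k) ^ m)
      = ∑ j, ∑ i ∈ Λ j,
          (if sVec j ∣ m then LinearMap.trace ℚ (V i k) ((B j i k) ^ (m / sVec j)) else 0) := by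
    intro k m
    have hF' : ∀ (i : Fin s) (v : V i k),
        F k (Pi.single i v) = Pi.single (σ i) ((F k (Pi.single i v)) (σ i)) := by
      intro i v
      rw [hF k i v, Pi.single_eq_same]
    rw [trace_pi (fun i => V i k) ((F k) ^ m)]
    have hcover : (Finset.univ : Finset (Fin s)) = Finset.univ.biUnion Λ := by
      ext i
      simp only [Finset.mem_univ, true_iff, Finset.mem_biUnion]
      obtain ⟨j, hj⟩ := hΛcover i
      exact ⟨j, ⟨trivial, hj⟩⟩
    have hdisj : (↑(Finset.univ : Finset (Fin q)) : Set (Fin q)).PairwiseDisjoint Λ := by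
      intro j _ j' _ hne
      exact hΛdisj j j' hne
    rw [show (∑ i : Fin s, LinearMap.trace ℚ (V i k)
          ((LinearMap.proj i) ∘ₗ ((F k) ^ m) ∘ₗ (LinearMap.single ℚ (fun j' => V j' k) i)))
        = ∑ i ∈ Finset.univ.biUnion Λ, LinearMap.trace ℚ (V i k)
          ((LinearMap.proj i) ∘ₗ ((F k) ^ m) ∘ₗ (LinearMap.single ℚ (fun j' => V j' k) i))
        by rw [← hcover]]
    rw [Finset.sum_biUnion hdisj]
    refine Finset.sum_congr rfl fun j _ => Finset.sum_congr rfl fun i hi => ?_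
    have hmp : Function.minimalPeriod ⇑σ i = sVec j := by
      rw [hsVec j, orbit_card σ (Λ j) i (hΛorb j i hi)]
    by_cases hdvd : sVec j ∣ m
    · have hb : (σ ^ (sVec j)) i = i := (pow_fix_iff_dvd σ i (sVec j)).2 (by rw [hmp])
      have hm' : sVec j * (m / sVec j) = m := Nat.mul_div_cancel' hdvd
      rw [if_pos hdvd]
      have := proj_pow_single_eq_pow σ (fun i' => V i' k) (F k) hF' hb (m / sVec j)
      rw [hm'] at this
      rw [this]
    · rw [if_neg hdvd]
      have hne : (σ ^ m) i ≠ i := by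
        intro hc
        exact hdvd (by rw [← hmp]; exact (pow_fix_iff_dvd σ i m).1 hc)
      rw [proj_pow_single_eq_zero σ (fun i' => V i' k) (F k) hF' m i hne, map_zero]
  -- key coefficient identity
  have KEY : (M : ℚ⟦X⟧) * ((PowerSeries.mk fun m => L (m+1)) - g1)
      = ∑ j, ((M / sVec j : ℕ) : ℚ⟦X⟧) * (∑ i ∈ Λ j, ∑ k : Fin N, e j i k) := by
    ext n
    have hcastM : ((M : ℕ) : ℚ⟦X⟧) = C ((M : ℕ) : ℚ) := (map_natCast (C (R := ℚ)) M).symm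
    rw [hcastM, coeff_C_mul, map_sub, coeff_mk, hg1def, coeff_mk, map_sum]
    have hstep : ∀ j, coeff n (((M / sVec j : ℕ) : ℚ⟦X⟧) * (∑ i ∈ Λ j, ∑ k : Fin N, e j i k))
        = ∑ i ∈ Λ j, ∑ k : Fin N, (-1:ℚ)^((k:ℕ)+1) *
            (if sVec j ∣ (n+1) then
              (M:ℚ) * LinearMap.trace ℚ (V i k) ((B j i k) ^ ((n+1) / sVec j)) else 0) := by
      intro j
      rw [(map_natCast (C (R := ℚ)) (M / sVec j)).symm, coeff_C_mul, map_sum, Finset.mul_sum]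
      refine Finset.sum_congr rfl fun i hi => ?_
      rw [map_sum, Finset.mul_sum]
      refine Finset.sum_congr rfl fun k _ => ?_
      have hce : coeff n (e j i k) = (-1:ℚ)^((k:ℕ)+1) *
          (if sVec j ∣ (n+1) then
            (sVec j : ℚ) * LinearMap.trace ℚ (V i k) ((B j i k) ^ ((n+1) / sVec j)) else 0) := by
        rw [hedef]
        by_cases hev : Even (k:ℕ)
        · simp only [if_pos hev]
          rw [map_neg]
          simp only [Tser, coeff_mk]
          rw [Odd.neg_one_pow hev.add_one]
          ring
        · simp only [if_neg hev]
          simp only [Tser, coeff_mk]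
          rw [Even.neg_one_pow ((Nat.not_even_iff_odd.1 hev).add_one)]
          ring
      rw [hce]
      by_cases hdv : sVec j ∣ (n+1)
      · rw [if_pos hdv, if_pos hdv]
        have hmc : ((M / sVec j : ℕ) : ℚ) * (sVec j : ℚ) = (M:ℚ) := by
          rw [← Nat.cast_mul, Nat.div_mul_cancel (hsdvdM j)]
        rw [← hmc]
        ring
      · rw [if_neg hdv, if_neg hdv]
        ring
    rw [Finset.sum_congr rfl fun j _ => hstep j, hL (n+1)]
    have hone : (1 + ∑ k : Fin N, (-1:ℚ)^((k:ℕ)+1) *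
        LinearMap.trace ℚ (Π i, V i k) ((F k)^(n+1))) - 1
        = ∑ k : Fin N, (-1:ℚ)^((k:ℕ)+1) *
          LinearMap.trace ℚ (Π i, V i k) ((F k)^(n+1)) := by ring
    rw [hone, Finset.mul_sum]
    rw [Finset.sum_congr rfl fun j (_ : j ∈ (Finset.univ : Finset (Fin q))) =>
      Finset.sum_comm (s := Λ j) (t := (Finset.univ : Finset (Fin N))), Finset.sum_comm]
    refine Finset.sum_congr rfl fun k _ => ?_
    rw [traceF k (n+1), ← mul_assoc, Finset.mul_sum]
    refine Finset.sum_congr rfl fun j _ => ?_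
    rw [Finset.mul_sum]
    refine Finset.sum_congr rfl fun i hi => ?_
    split_ifs with hdv
    · ring
    · ring
  -- conclude
  have hfinal : (((1 : ℚ⟦X⟧) - X) * expPS f) ^ M
      = ∏ j, (∏ i ∈ Λ j, ∏ k : Fin N, Q j i k) ^ (M / sVec j) := by
    refine eq_of_deriv_rel hcL hcR ?_
    rw [hLHS, hRHSder, ← KEY]
    ring
  rw [hzeta]
  exact hfinal
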